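/- Let (Z, Z_ρ) be a centered bivariate Gaussian vector with Var(Z) = Var(Z_ρ) = 1 and E[Z·Z_ρ] = ρ ∈ (-1,1). Then for every t > 0, P(Z > t and Z_ρ > t) ≤ ((1+ρ)²/(2π·t²·√(1-ρ²)))·exp(-t²/(1+ρ)). -/

import Mathlib

open Real MeasureTheory Set Filter


lemma my_integral_exp_neg_mul_Ioi (a : ℝ) {b : ℝ} (hb : 0 < b) :
    ∫ x in Set.Ioi a, Real.exp (-(b * x)) = Real.exp (-(b * a)) / b := by
  have hderiv : ∀ x ∈ Set.Ici a, HasDerivAt (fun x => -Real.exp (-(b * x)) / b)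
      (Real.exp (-(b * x))) x := by
    intro x _
    have h1 : HasDerivAt (fun x : ℝ => -(b * x)) (-b) x := by
      simpa using ((hasDerivAt_id x).const_mul b).fun_neg
    have h2 := (Real.hasDerivAt_exp (-(b * x))).comp x h1
    convert (h2.neg.div_const b) using 1
    · rfl
    · rfl
    · rfl
    · field_simp
  have hint : IntegrableOn (fun x => Real.exp (-(b * x))) (Set.Ioi a) := by
    simpa [neg_mul] using exp_neg_integrableOn_Ioi a hb
  have htend : Tendsto (fun x => -Real.exp (-(b * x)) / b) atTop (nhds 0) := by
    have : Tendsto (fun x : ℝ => b * x) atTop atTop :=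
      Tendsto.const_mul_atTop hb tendsto_id
    have h := (Real.tendsto_exp_atBot.comp (tendsto_neg_atTop_atBot.comp this))
    simpa using (h.neg.div_const b)
  have := integral_Ioi_of_hasDerivAt_of_tendsto' hderiv hint htend
  rw [this]; field_simp; ring


/-- The standard bivariate normal density with correlation ρ. -/
noncomputable def bivNormalDensity (ρ : ℝ) (q : ℝ × ℝ) : ℝ :=
  (1 / (2 * π * Real.sqrt (1 - ρ ^ 2))) *
    Real.exp (-(q.1 ^ 2 - 2 * ρ * q.1 * q.2 + q.2 ^ 2) / (2 * (1 - ρ ^ 2)))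

/-- The law of a centered bivariate Gaussian vector with unit variances and correlation ρ. -/
noncomputable def bivNormal (ρ : ℝ) : Measure (ℝ × ℝ) :=
  (volume : Measure (ℝ × ℝ)).withDensity (fun q => ENNReal.ofReal (bivNormalDensity ρ q))

theorem bivariate_gaussian_tail (ρ : ℝ) (hρ1 : -1 < ρ) (hρ2 : ρ < 1) (t : ℝ) (ht : 0 < t) :
    (bivNormal ρ {q : ℝ × ℝ | t < q.1 ∧ t < q.2}).toReal ≤
      ((1 + ρ) ^ 2 / (2 * π * t ^ 2 * Real.sqrt (1 - ρ ^ 2))) *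
        Real.exp (-t ^ 2 / (1 + ρ)) := by
  have h1ρ : (0:ℝ) < 1 + ρ := by linarith
  have h1ρ' : (0:ℝ) < 1 - ρ := by linarith
  have hρsq : (0:ℝ) < 1 - ρ ^ 2 := by nlinarith
  have hs : (0:ℝ) < Real.sqrt (1 - ρ ^ 2) := Real.sqrt_pos.mpr hρsq
  set s := Real.sqrt (1 - ρ ^ 2) with hs_def
  have hπ : (0:ℝ) < π := Real.pi_pos
  set c : ℝ := t / (1 + ρ) with hc_def
  have hc : 0 < c := div_pos ht h1ρ
  set f : ℝ → ℝ := fun x => Real.exp (-(c * (x - t))) with hf_def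
  set K : ℝ := (1 / (2 * π * s)) * Real.exp (-t ^ 2 / (1 + ρ)) with hK_def
  have hK : 0 ≤ K := by positivity
  have hSet : {q : ℝ × ℝ | t < q.1 ∧ t < q.2} = Set.Ioi t ×ˢ Set.Ioi t := by
    ext q; simp [Set.mem_prod]
  have hSm : MeasurableSet (Set.Ioi t ×ˢ Set.Ioi t : Set (ℝ × ℝ)) :=
    measurableSet_Ioi.prod measurableSet_Ioi
  -- pointwise bound
  have hpt : ∀ q ∈ (Set.Ioi t ×ˢ Set.Ioi t : Set (ℝ × ℝ)),
      bivNormalDensity ρ q ≤ K * (f q.1 * f q.2) := by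
    rintro ⟨x, y⟩ ⟨hx, hy⟩
    simp only [Set.mem_Ioi] at hx hy
    have key : -(x ^ 2 - 2 * ρ * x * y + y ^ 2) / (2 * (1 - ρ ^ 2)) ≤
        -t ^ 2 / (1 + ρ) + (-(c * (x - t)) + -(c * (y - t))) := by
      have hq : 0 ≤ (x - t) ^ 2 - 2 * ρ * (x - t) * (y - t) + (y - t) ^ 2 := by
        nlinarith [sq_nonneg (x - y), sq_nonneg (x + y - 2 * t)]
      have hR : (-t ^ 2 / (1 + ρ) + (-(c * (x - t)) + -(c * (y - t)))) * (2 * (1 - ρ ^ 2))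
          = -(2 * (1 - ρ) * t ^ 2) - 2 * t * (1 - ρ) * (x - t) - 2 * t * (1 - ρ) * (y - t) := by
        rw [hc_def]; field_simp; ring
      rw [div_le_iff₀ (by positivity), hR]
      nlinarith [hq]
    calc bivNormalDensity ρ (x, y)
        = (1 / (2 * π * s)) *
          Real.exp (-(x ^ 2 - 2 * ρ * x * y + y ^ 2) / (2 * (1 - ρ ^ 2))) := rfl
      _ ≤ (1 / (2 * π * s)) *
          Real.exp (-t ^ 2 / (1 + ρ) + (-(c * (x - t)) + -(c * (y - t)))) := by
          apply mul_le_mul_of_nonneg_left (Real.exp_le_exp.mpr key) (by positivity)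
      _ = K * (f x * f y) := by
          simp [hK_def, hf_def, Real.exp_add, mul_assoc]
  -- integrability
  have hfint : IntegrableOn f (Set.Ioi t) := by
    have h0 : IntegrableOn (fun x => Real.exp (c * t) * Real.exp (-(c * x)))
        (Set.Ioi t) := by
      refine Integrable.const_mul ?_ _
      simpa [neg_mul, IntegrableOn] using exp_neg_integrableOn_Ioi t hc
    refine h0.congr_fun (fun x _ => ?_) measurableSet_Ioi
    beta_reduce; rw [← Real.exp_add, hf_def]; ring_nf
  have hrestrict : (volume : Measure (ℝ × ℝ)).restrict (Set.Ioi t ×ˢ Set.Ioi t)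
      = (volume.restrict (Set.Ioi t)).prod (volume.restrict (Set.Ioi t)) := by
    rw [Measure.volume_eq_prod, Measure.prod_restrict]
  have hgint : IntegrableOn (fun q : ℝ × ℝ => K * (f q.1 * f q.2))
      (Set.Ioi t ×ˢ Set.Ioi t) := by
    unfold IntegrableOn
    rw [hrestrict]
    exact (hfint.mul_prod hfint).const_mul K
  -- value of f integral
  have hfval : ∫ x in Set.Ioi t, f x = (1 + ρ) / t := by
    have h0 : ∫ x in Set.Ioi t, f x
        = ∫ x in Set.Ioi t, Real.exp (c * t) * Real.exp (-(c * x)) := by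
      refine setIntegral_congr_fun measurableSet_Ioi (fun x _ => ?_)
      rw [← Real.exp_add, hf_def]; ring_nf
    rw [h0, integral_const_mul, my_integral_exp_neg_mul_Ioi t hc]
    have : Real.exp (c * t) * (Real.exp (-(c * t)) / c) = 1 / c := by
      rw [mul_div_assoc', ← Real.exp_add]; simp
    rw [this, hc_def, one_div_div]
  -- main chain
  have hμ : bivNormal ρ {q : ℝ × ℝ | t < q.1 ∧ t < q.2}
      ≤ ENNReal.ofReal (K * ((1 + ρ) / t * ((1 + ρ) / t))) := by
    rw [bivNormal, hSet, withDensity_apply _ hSm]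
    have hmono : ∫⁻ q in Set.Ioi t ×ˢ Set.Ioi t, ENNReal.ofReal (bivNormalDensity ρ q)
        ≤ ∫⁻ q in Set.Ioi t ×ˢ Set.Ioi t, ENNReal.ofReal (K * (f q.1 * f q.2)) := by
      refine setLIntegral_mono_ae (by fun_prop) ?_
      exact Filter.Eventually.of_forall fun q hq => ENNReal.ofReal_le_ofReal (hpt q hq)
    refine hmono.trans ?_
    have heq : ∫⁻ q in Set.Ioi t ×ˢ Set.Ioi t, ENNReal.ofReal (K * (f q.1 * f q.2))
        = ENNReal.ofReal (∫ q in Set.Ioi t ×ˢ Set.Ioi t, K * (f q.1 * f q.2)) := by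
      rw [← ofReal_integral_eq_lintegral_ofReal hgint]
      exact Filter.Eventually.of_forall fun q => by positivity
    rw [heq]
    apply ENNReal.ofReal_le_ofReal
    rw [show (∫ q in Set.Ioi t ×ˢ Set.Ioi t, K * (f q.1 * f q.2))
        = ∫ q, K * (f q.1 * f q.2)
          ∂((volume.restrict (Set.Ioi t)).prod (volume.restrict (Set.Ioi t))) by
      rw [← hrestrict]]
    rw [integral_const_mul, integral_prod_mul, hfval]
  have hval : 0 ≤ K * ((1 + ρ) / t * ((1 + ρ) / t)) := by positivity
  refine (ENNReal.toReal_le_of_le_ofReal hval hμ).trans_eq ?_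
  rw [hK_def]
  field_simp
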